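/- Let A ∈ ℝ^{m×n}, b ∈ ℝ^m with Ax = b consistent, and let x* be the unique solution of Ax = b lying in Range(Aᵀ). Let S be a measurable random m×q real matrix on a probability space (Ω, 𝓕, P) such that ω ↦ S(ω)S(ω)ᵀ is Bochner integrable, H := E[SSᵀ] is positive definite, and λ_max(AᵀS(ω)S(ω)ᵀA) ≤ λ for P-almost every ω for some λ > 0. Let x ∈ Range(Aᵀ) and d ∈ ℝⁿ, and assume that for P-almost every ω: S(ω)ᵀ(Ax − b) ≠ 0 and the vectors g(ω) := AᵀS(ω)S(ω)ᵀ(Ax − b) and d are linearly independent. For each such ω define L(ω) := ‖S(ω)ᵀ(Ax − b)‖₂²/‖g(ω)‖₂², x̃(ω) := x − L(ω)g(ω), u(ω) := ⟨g(ω), d⟩g(ω) − ‖g(ω)‖₂²d, and let x⁺(ω) be the orthogonal projection of x* onto the affine set {x + αg(ω) + βd : α, β ∈ ℝ}. Let γ ∈ [0, 1] be such that ⟨x̃(ω) − x*, u(ω)⟩² ≥ γ·‖x̃(ω) − x*‖₂²·‖u(ω)‖₂² for P-almost every ω. Then ∫ ‖x⁺(ω) − x*‖₂² dP(ω) ≤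 (1 − γ)(1 − σ²/λ)·‖x − x*‖₂², where σ² := inf{‖H^{1/2}Av‖₂² : v ∈ Range(Aᵀ), ‖v‖₂ = 1} is the square of the smallest nonzero singular value of H^{1/2}A. -/

import Mathlib

open Matrix MeasureTheory

/-- The sketched residual `Sᵀ(Ax − b)`. -/
noncomputable def sres {m n q : ℕ} (A : Matrix (Fin m) (Fin n) ℝ) (b : Fin m → ℝ)
    (S : Matrix (Fin m) (Fin q) ℝ) (x : Fin n → ℝ) : Fin q → ℝ :=
  Sᵀ.mulVec (A.mulVec x - b)

/-- The stochastic gradient `∇f_S(x) = Aᵀ S Sᵀ (Ax − b)`. -/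
noncomputable def sgrad {m n q : ℕ} (A : Matrix (Fin m) (Fin n) ℝ) (b : Fin m → ℝ)
    (S : Matrix (Fin m) (Fin q) ℝ) (x : Fin n → ℝ) : Fin n → ℝ :=
  Aᵀ.mulVec (S.mulVec (Sᵀ.mulVec (A.mulVec x - b)))

/-- The adaptive (Polyak) step-size `L_adap = ‖Sᵀ(Ax−b)‖₂²/‖∇f_S(x)‖₂²`. -/
noncomputable def Lad {m n q : ℕ} (A : Matrix (Fin m) (Fin n) ℝ) (b : Fin m → ℝ)
    (S : Matrix (Fin m) (Fin q) ℝ) (x : Fin n → ℝ) : ℝ :=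
  (sres A b S x ⬝ᵥ sres A b S x) / (sgrad A b S x ⬝ᵥ sgrad A b S x)

/-- The square root of a positive semidefinite matrix, as `Matrix.PosSemidef.sqrt` was defined
in the older Mathlib (that definition has since been removed). -/
noncomputable def posSemidefSqrt {k : ℕ} {M : Matrix (Fin k) (Fin k) ℝ} (hA : M.PosSemidef) :
    Matrix (Fin k) (Fin k) ℝ :=
  hA.1.eigenvectorUnitary.1 * diagonal ((↑) ∘ Real.sqrt ∘ hA.1.eigenvalues) *
    (star hA.1.eigenvectorUnitary : Matrix (Fin k) (Fin k) ℝ)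

lemma posSemidefSqrt_transpose {k : ℕ} {M : Matrix (Fin k) (Fin k) ℝ} (hA : M.PosSemidef) :
    (posSemidefSqrt hA)ᵀ = posSemidefSqrt hA := by
  unfold posSemidefSqrt
  simp only [transpose_mul, diagonal_transpose, Matrix.mul_assoc,
    star_eq_conjTranspose, conjTranspose_eq_transpose_of_trivial, transpose_transpose]

lemma posSemidefSqrt_mul_self {k : ℕ} {M : Matrix (Fin k) (Fin k) ℝ} (hA : M.PosSemidef) :
    posSemidefSqrt hA * posSemidefSqrt hA = M := by
  unfold posSemidefSqrt
  set U := hA.1.eigenvectorUnitary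
  have hU : (star U : Matrix (Fin k) (Fin k) ℝ) * U.1 = 1 := Unitary.coe_star_mul_self U
  have hD : diagonal ((↑) ∘ Real.sqrt ∘ hA.1.eigenvalues) * diagonal ((↑) ∘ Real.sqrt ∘ hA.1.eigenvalues)
      = diagonal (((↑) : ℝ → ℝ) ∘ hA.1.eigenvalues) := by
    rw [diagonal_mul_diagonal]; congr 1; funext i
    simp [Real.mul_self_sqrt (hA.eigenvalues_nonneg i)]
  conv_rhs => rw [hA.1.spectral_theorem]
  rw [Unitary.conjStarAlgAut_apply]
  calc _ = U.1 * (diagonal ((↑) ∘ Real.sqrt ∘ hA.1.eigenvalues) * ((star U : Matrix (Fin k) (Fin k) ℝ) * U.1) * diagonal ((↑) ∘ Real.sqrt ∘ hA.1.eigenvalues)) * (star U : Matrix (Fin k) (Fin k) ℝ) := by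
        simp only [Matrix.mul_assoc]
    _ = _ := by rw [hU, Matrix.mul_one, hD]; rfl

lemma dot_self_nonneg' {k : ℕ} (v : Fin k → ℝ) : 0 ≤ v ⬝ᵥ v :=
  Finset.sum_nonneg fun _ _ => mul_self_nonneg _

lemma dot_self_pos {k : ℕ} {v : Fin k → ℝ} (h : v ≠ 0) : 0 < v ⬝ᵥ v :=
  lt_of_le_of_ne (dot_self_nonneg' v) (fun h' => h (dotProduct_self_eq_zero.mp h'.symm))

lemma adj_dot {a b : ℕ} (M : Matrix (Fin a) (Fin b) ℝ) (v : Fin a → ℝ) (w : Fin b → ℝ) :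
    (Mᵀ *ᵥ v) ⬝ᵥ w = v ⬝ᵥ (M *ᵥ w) := by
  rw [dotProduct_comm, dotProduct_mulVec, vecMul_transpose, dotProduct_comm]

lemma adj_dot' {a b : ℕ} (M : Matrix (Fin a) (Fin b) ℝ) (v : Fin b → ℝ) (w : Fin a → ℝ) :
    (M *ᵥ v) ⬝ᵥ w = v ⬝ᵥ (Mᵀ *ᵥ w) := by
  conv_lhs => rw [← transpose_transpose M]
  rw [adj_dot]

lemma dot_cs {k : ℕ} (v w : Fin k → ℝ) : (v ⬝ᵥ w) ^ 2 ≤ (v ⬝ᵥ v) * (w ⬝ᵥ w) := by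
  have := Finset.sum_mul_sq_le_sq_mul_sq Finset.univ v w
  simpa [dotProduct, pow_two] using this

lemma key_bound {n : ℕ} (e g d u w xp : Fin n → ℝ) (zz lam γ : ℝ)
    (hzz : 0 < zz) (hlam : 0 < lam)
    (hg : g ≠ 0)
    (heg : e ⬝ᵥ g = zz)
    (hgg : g ⬝ᵥ g ≤ lam * zz)
    (hw : w = e - (zz / (g ⬝ᵥ g)) • g)
    (hu0 : u ≠ 0)
    (hud : ∃ α β : ℝ, u = α • g + β • d)
    (hγ1 : γ ≤ 1)
    (hγ : γ * ((w ⬝ᵥ w) * (u ⬝ᵥ u)) ≤ (w ⬝ᵥ u) ^ 2)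
    (hp : ∀ α β : ℝ, xp ⬝ᵥ xp ≤ (e + α • g + β • d) ⬝ᵥ (e + α • g + β • d)) :
    xp ⬝ᵥ xp ≤ (1 - γ) * (e ⬝ᵥ e - zz / lam) := by
  have hggpos : 0 < g ⬝ᵥ g := dot_self_pos hg
  have huu : 0 < u ⬝ᵥ u := dot_self_pos hu0
  obtain ⟨a, c, hau⟩ := hud
  set t : ℝ := -(w ⬝ᵥ u) / (u ⬝ᵥ u) with ht
  have step1 : xp ⬝ᵥ xp ≤ (w + t • u) ⬝ᵥ (w + t • u) := by
    have := hp (-(zz / (g ⬝ᵥ g)) + t * a) (t * c)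
    have heq : e + (-(zz / (g ⬝ᵥ g)) + t * a) • g + (t * c) • d = w + t • u := by
      rw [hw, hau]; module
    rwa [heq] at this
  have expand : (w + t • u) ⬝ᵥ (w + t • u)
      = w ⬝ᵥ w + 2 * t * (w ⬝ᵥ u) + t ^ 2 * (u ⬝ᵥ u) := by
    simp only [dotProduct_add, add_dotProduct, smul_dotProduct, dotProduct_smul,
      smul_eq_mul, dotProduct_comm u w]
    ring
  have hval : (w + t • u) ⬝ᵥ (w + t • u) = w ⬝ᵥ w - (w ⬝ᵥ u) ^ 2 / (u ⬝ᵥ u) := by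
    rw [expand, ht]; field_simp; ring
  have step2 : w ⬝ᵥ w - (w ⬝ᵥ u) ^ 2 / (u ⬝ᵥ u) ≤ (1 - γ) * (w ⬝ᵥ w) := by
    have h2 : γ * (w ⬝ᵥ w) ≤ (w ⬝ᵥ u) ^ 2 / (u ⬝ᵥ u) := by
      rw [le_div_iff₀ huu]; nlinarith [hγ]
    nlinarith [h2]
  have hww : w ⬝ᵥ w = e ⬝ᵥ e - zz ^ 2 / (g ⬝ᵥ g) := by
    rw [hw]
    simp only [sub_dotProduct, dotProduct_sub, smul_dotProduct, dotProduct_smul,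
      smul_eq_mul, heg, dotProduct_comm g e]
    field_simp
    ring
  have step3 : e ⬝ᵥ e - zz ^ 2 / (g ⬝ᵥ g) ≤ e ⬝ᵥ e - zz / lam := by
    have h1 : zz / lam ≤ zz ^ 2 / (g ⬝ᵥ g) := by
      rw [div_le_div_iff₀ hlam hggpos]
      nlinarith
    linarith
  calc xp ⬝ᵥ xp ≤ (w + t • u) ⬝ᵥ (w + t • u) := step1
    _ = w ⬝ᵥ w - (w ⬝ᵥ u) ^ 2 / (u ⬝ᵥ u) := hval
    _ ≤ (1 - γ) * (w ⬝ᵥ w) := step2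
    _ = (1 - γ) * (e ⬝ᵥ e - zz ^ 2 / (g ⬝ᵥ g)) := by rw [hww]
    _ ≤ (1 - γ) * (e ⬝ᵥ e - zz / lam) := by
        exact mul_le_mul_of_nonneg_left step3 (by linarith)

lemma dot_e_sgrad {m n q : ℕ} (A : Matrix (Fin m) (Fin n) ℝ) (b : Fin m → ℝ)
    (xstar : Fin n → ℝ) (hxs : A.mulVec xstar = b)
    (S : Matrix (Fin m) (Fin q) ℝ) (x : Fin n → ℝ) :
    (x - xstar) ⬝ᵥ sgrad A b S x = sres A b S x ⬝ᵥ sres A b S x := by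
  have hrb : A *ᵥ (x - xstar) = A.mulVec x - b := by rw [mulVec_sub, hxs]
  unfold sgrad sres
  rw [dotProduct_comm, adj_dot, ← hrb, adj_dot', dotProduct_comm, hrb]

lemma norm_mulVec_le {m n q : ℕ} (A : Matrix (Fin m) (Fin n) ℝ)
    (S : Matrix (Fin m) (Fin q) ℝ) (lam : ℝ) (hlam : 0 ≤ lam)
    (hlamS : ∀ y : Fin n → ℝ, y ⬝ᵥ (Aᵀ * S * Sᵀ * A).mulVec y ≤ lam * (y ⬝ᵥ y))
    (z : Fin q → ℝ) (g : Fin n → ℝ) (hg : g = Aᵀ *ᵥ (S *ᵥ z)) :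
    g ⬝ᵥ g ≤ lam * (z ⬝ᵥ z) := by
  have h1 : g ⬝ᵥ g = z ⬝ᵥ (Sᵀ *ᵥ (A *ᵥ g)) := by
    conv_lhs => rw [hg]
    rw [adj_dot, adj_dot', ← hg]
  have h2 : (Sᵀ *ᵥ (A *ᵥ g)) ⬝ᵥ (Sᵀ *ᵥ (A *ᵥ g)) = g ⬝ᵥ (Aᵀ * S * Sᵀ * A).mulVec g := by
    rw [adj_dot, adj_dot']
    simp [mulVec_mulVec, Matrix.mul_assoc]
  have hcs := dot_cs z (Sᵀ *ᵥ (A *ᵥ g))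
  have hb : (Sᵀ *ᵥ (A *ᵥ g)) ⬝ᵥ (Sᵀ *ᵥ (A *ᵥ g)) ≤ lam * (g ⬝ᵥ g) := by
    rw [h2]; exact hlamS g
  by_cases hg0 : g = 0
  · rw [hg0]
    simp only [zero_dotProduct]
    exact mul_nonneg hlam (dot_self_nonneg' z)
  · have hggpos : 0 < g ⬝ᵥ g := dot_self_pos hg0
    nlinarith [dot_self_nonneg' z, dot_self_nonneg' (Sᵀ *ᵥ (A *ᵥ g))]

lemma sgrad_sq_le {m n q : ℕ} (A : Matrix (Fin m) (Fin n) ℝ) (b : Fin m → ℝ)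
    (S : Matrix (Fin m) (Fin q) ℝ) (x : Fin n → ℝ) (lam : ℝ) (hlam : 0 ≤ lam)
    (hlamS : ∀ y : Fin n → ℝ, y ⬝ᵥ (Aᵀ * S * Sᵀ * A).mulVec y ≤ lam * (y ⬝ᵥ y)) :
    sgrad A b S x ⬝ᵥ sgrad A b S x ≤ lam * (sres A b S x ⬝ᵥ sres A b S x) :=
  norm_mulVec_le A S lam hlam hlamS (sres A b S x) (sgrad A b S x) rfl

lemma sres_sq_repr {m n q : ℕ} (A : Matrix (Fin m) (Fin n) ℝ) (b : Fin m → ℝ)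
    (S : Matrix (Fin m) (Fin q) ℝ) (x : Fin n → ℝ) :
    sres A b S x ⬝ᵥ sres A b S x =
      ∑ i, ∑ j, ((A.mulVec x - b) i * (A.mulVec x - b) j) * ((S * Sᵀ) i j) := by
  unfold sres
  rw [adj_dot, mulVec_mulVec]
  simp only [dotProduct, Matrix.mulVec, Finset.mul_sum]
  exact Finset.sum_congr rfl fun i _ => Finset.sum_congr rfl fun j _ => by
    simp [dotProduct]; ring

theorem ashbm_one_step_expected_error_bound
    {m n q : ℕ} (A : Matrix (Fin m) (Fin n) ℝ) (b : Fin m → ℝ)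
    (xstar : Fin n → ℝ) (hxs : A.mulVec xstar = b) (hxs' : ∃ y, xstar = Aᵀ.mulVec y)
    {Ω : Type*} [MeasurableSpace Ω] (P : Measure Ω) [IsProbabilityMeasure P]
    (S : Ω → Matrix (Fin m) (Fin q) ℝ)
    (hSmeas : ∀ i j, Measurable fun ω => S ω i j)
    (hSint : ∀ i j, Integrable (fun ω => (S ω * (S ω)ᵀ) i j) P)
    (H : Matrix (Fin m) (Fin m) ℝ)
    (hH : ∀ i j, H i j = ∫ ω, (S ω * (S ω)ᵀ) i j ∂P)
    (hHpd : H.PosDef)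
    (lam : ℝ) (hlam : 0 < lam)
    (hlamb : ∀ᵐ ω ∂P, ∀ y : Fin n → ℝ,
      y ⬝ᵥ (Aᵀ * S ω * (S ω)ᵀ * A).mulVec y ≤ lam * (y ⬝ᵥ y))
    (x : Fin n → ℝ) (hx : ∃ y, x = Aᵀ.mulVec y)
    (d : Fin n → ℝ)
    (hae : ∀ᵐ ω ∂P, sres A b (S ω) x ≠ 0 ∧
      LinearIndependent ℝ ![sgrad A b (S ω) x, d])
    (xt u : Ω → Fin n → ℝ)
    (hxt : ∀ ω, xt ω = x - Lad A b (S ω) x • sgrad A b (S ω) x)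
    (hu : ∀ ω, u ω = (sgrad A b (S ω) x ⬝ᵥ d) • sgrad A b (S ω) x -
      (sgrad A b (S ω) x ⬝ᵥ sgrad A b (S ω) x) • d)
    (xplus : Ω → Fin n → ℝ)
    (hxpmeas : ∀ i, Measurable fun ω => xplus ω i)
    (hproj : ∀ᵐ ω ∂P,
      (∃ α β : ℝ, xplus ω = x + α • sgrad A b (S ω) x + β • d) ∧
      ∀ α β : ℝ, (xplus ω - xstar) ⬝ᵥ (xplus ω - xstar) ≤
        ((x + α • sgrad A b (S ω) x + β • d) - xstar) ⬝ᵥ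
          ((x + α • sgrad A b (S ω) x + β • d) - xstar))
    (γ : ℝ) (hγ : γ ∈ Set.Icc (0 : ℝ) 1)
    (hγae : ∀ᵐ ω ∂P,
      γ * (((xt ω - xstar) ⬝ᵥ (xt ω - xstar)) * (u ω ⬝ᵥ u ω)) ≤
        ((xt ω - xstar) ⬝ᵥ u ω) ^ 2)
    (σ2 : ℝ)
    (hσ2 : σ2 = sInf {r : ℝ | ∃ v : Fin n → ℝ, (∃ y, v = Aᵀ.mulVec y) ∧ v ⬝ᵥ v = 1 ∧
      r = ((posSemidefSqrt hHpd.posSemidef * A).mulVec v) ⬝ᵥ ((posSemidefSqrt hHpd.posSemidef * A).mulVec v)}) :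
    ∫ ω, (xplus ω - xstar) ⬝ᵥ (xplus ω - xstar) ∂P ≤
      (1 - γ) * (1 - σ2 / lam) * ((x - xstar) ⬝ᵥ (x - xstar)) := by
  set e : Fin n → ℝ := x - xstar with he
  set r : Fin m → ℝ := A.mulVec x - b with hrdef
  have hrb : A *ᵥ e = r := by rw [he, mulVec_sub, hxs, hrdef]
  -- e ≠ 0
  have hene : e ≠ 0 := by
    intro h0
    obtain ⟨ω, hω⟩ := hae.exists
    apply hω.1
    have hx0 : x = xstar := by rwa [he, sub_eq_zero] at h0
    unfold sres
    rw [hx0, hxs, sub_self, Matrix.mulVec_zero]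
  have hee : 0 < e ⬝ᵥ e := dot_self_pos hene
  -- the dominating function
  set Z : Ω → ℝ := fun ω => sres A b (S ω) x ⬝ᵥ sres A b (S ω) x with hZ
  set G : Ω → ℝ := fun ω => (1 - γ) * (e ⬝ᵥ e - Z ω / lam) with hG
  -- pointwise a.e. bound
  have hFG : ∀ᵐ ω ∂P, (xplus ω - xstar) ⬝ᵥ (xplus ω - xstar) ≤ G ω := by
    filter_upwards [hlamb, hae, hproj, hγae] with ω h1 h2 h3 h4
    set g := sgrad A b (S ω) x with hgdef
    have hg0 : g ≠ 0 := by
      have := h2.2.ne_zero 0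
      simpa using this
    have hu0 : u ω ≠ 0 := by
      intro h0
      rw [hu ω] at h0
      have hpair := (LinearIndependent.pair_iff.mp h2.2 (g ⬝ᵥ d) (-(g ⬝ᵥ g))
        (by rw [neg_smul, ← sub_eq_add_neg]; exact h0)).2
      exact hg0 (dotProduct_self_eq_zero.mp (by linarith [neg_eq_zero.mp hpair]))
    refine key_bound e g d (u ω) (xt ω - xstar) (xplus ω - xstar)
      (sres A b (S ω) x ⬝ᵥ sres A b (S ω) x) lam γ
      (dot_self_pos h2.1) hlam hg0
      (dot_e_sgrad A b xstar hxs (S ω) x) (sgrad_sq_le A b (S ω) x lam hlam.le h1)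
      ?_ hu0 ⟨g ⬝ᵥ d, -(g ⬝ᵥ g), by rw [hu ω, neg_smul, ← sub_eq_add_neg]⟩ hγ.2 h4 ?_
    · rw [hxt ω]
      have : Lad A b (S ω) x = (sres A b (S ω) x ⬝ᵥ sres A b (S ω) x) / (g ⬝ᵥ g) := rfl
      rw [this]
      module
    · intro α β
      have hq := h3.2 α β
      have heq : (x + α • g + β • d) - xstar = e + α • g + β • d := by rw [he]; module
      rwa [heq] at hq
  -- integrability of Z
  have hZrepr : Z = fun ω => ∑ i, ∑ j, (r i * r j) * ((S ω * (S ω)ᵀ) i j) := by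
    funext ω
    show sres A b (S ω) x ⬝ᵥ sres A b (S ω) x = _
    rw [sres_sq_repr, hrdef]
  have hZint : Integrable Z P := by
    rw [hZrepr]
    exact integrable_finset_sum _ fun i _ =>
      integrable_finset_sum _ fun j _ => (hSint i j).const_mul _
  have hZval : ∫ ω, Z ω ∂P = r ⬝ᵥ H *ᵥ r := by
    have h1 : ∫ ω, Z ω ∂P = ∑ i, ∑ j, (r i * r j) * H i j := by
      simp_rw [hZrepr]
      rw [integral_finset_sum _ (fun i _ =>
        integrable_finset_sum _ fun j _ => (hSint i j).const_mul _)]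
      refine Finset.sum_congr rfl fun i _ => ?_
      rw [integral_finset_sum _ (fun j _ => (hSint i j).const_mul _)]
      refine Finset.sum_congr rfl fun j _ => ?_
      rw [integral_const_mul, hH]
    rw [h1, show r ⬝ᵥ H *ᵥ r = ∑ i, ∑ j, r i * (H i j * r j) from by
      simp [dotProduct, Matrix.mulVec, Finset.mul_sum]]
    exact Finset.sum_congr rfl fun i _ => Finset.sum_congr rfl fun j _ => by ring
  -- sqrt facts
  set Q : Matrix (Fin m) (Fin n) ℝ := posSemidefSqrt hHpd.posSemidef * A with hQdef
  have hsym : (posSemidefSqrt hHpd.posSemidef)ᵀ = posSemidefSqrt hHpd.posSemidef := by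
    exact posSemidefSqrt_transpose _
  have hQe : r ⬝ᵥ H *ᵥ r = (Q *ᵥ e) ⬝ᵥ (Q *ᵥ e) := by
    rw [hQdef, ← mulVec_mulVec, hrb]
    rw [adj_dot', hsym, mulVec_mulVec, posSemidefSqrt_mul_self hHpd.posSemidef]
  -- σ2 bound
  have hσbound : σ2 * (e ⬝ᵥ e) ≤ (Q *ᵥ e) ⬝ᵥ (Q *ᵥ e) := by
    set s : ℝ := Real.sqrt (e ⬝ᵥ e) with hs
    have hspos : 0 < s := Real.sqrt_pos.mpr hee
    have hs2 : s * s = e ⬝ᵥ e := Real.mul_self_sqrt hee.le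
    set v : Fin n → ℝ := s⁻¹ • e with hv
    have hv1 : v ⬝ᵥ v = 1 := by
      rw [hv, smul_dotProduct, dotProduct_smul, smul_eq_mul, smul_eq_mul, ← hs2]
      field_simp
    have hvr : ∃ y, v = Aᵀ *ᵥ y := by
      obtain ⟨y1, hy1⟩ := hx
      obtain ⟨y2, hy2⟩ := hxs'
      exact ⟨s⁻¹ • (y1 - y2), by
        rw [hv, mulVec_smul, mulVec_sub, ← hy1, ← hy2, he]⟩
    have hQv : (Q *ᵥ v) ⬝ᵥ (Q *ᵥ v) = s⁻¹ * (s⁻¹ * ((Q *ᵥ e) ⬝ᵥ (Q *ᵥ e))) := by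
      rw [hv, mulVec_smul, smul_dotProduct, dotProduct_smul, smul_eq_mul, smul_eq_mul]
    have hbdd : BddBelow {r : ℝ | ∃ v : Fin n → ℝ, (∃ y, v = Aᵀ.mulVec y) ∧ v ⬝ᵥ v = 1 ∧
        r = ((posSemidefSqrt hHpd.posSemidef * A).mulVec v) ⬝ᵥ ((posSemidefSqrt hHpd.posSemidef * A).mulVec v)} := by
      refine ⟨0, fun rr hrr => ?_⟩
      obtain ⟨v', -, -, rfl⟩ := hrr
      exact dot_self_nonneg' _
    have hmem : (Q *ᵥ v) ⬝ᵥ (Q *ᵥ v) ∈ {r : ℝ | ∃ v : Fin n → ℝ, (∃ y, v = Aᵀ.mulVec y) ∧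
        v ⬝ᵥ v = 1 ∧
        r = ((posSemidefSqrt hHpd.posSemidef * A).mulVec v) ⬝ᵥ ((posSemidefSqrt hHpd.posSemidef * A).mulVec v)} :=
      ⟨v, hvr, hv1, rfl⟩
    have hle : σ2 ≤ (Q *ᵥ v) ⬝ᵥ (Q *ᵥ v) := by
      rw [hσ2]; exact csInf_le hbdd hmem
    rw [hQv] at hle
    have := mul_le_mul_of_nonneg_right hle hee.le
    calc σ2 * (e ⬝ᵥ e) ≤ s⁻¹ * (s⁻¹ * ((Q *ᵥ e) ⬝ᵥ (Q *ᵥ e))) * (e ⬝ᵥ e) := this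
      _ = (Q *ᵥ e) ⬝ᵥ (Q *ᵥ e) := by
          rw [← hs2]; field_simp
  -- integrability of F
  have hFmeas : Measurable fun ω => (xplus ω - xstar) ⬝ᵥ (xplus ω - xstar) := by
    apply Finset.measurable_sum
    intro i _
    exact ((hxpmeas i).sub measurable_const).mul ((hxpmeas i).sub measurable_const)
  have hGint : Integrable G P := by
    rw [hG]
    exact ((integrable_const _).sub (hZint.div_const lam)).const_mul _
  have hFint : Integrable (fun ω => (xplus ω - xstar) ⬝ᵥ (xplus ω - xstar)) P := by
    refine Integrable.mono' hGint hFmeas.aestronglyMeasurable ?_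
    filter_upwards [hFG] with ω hω
    rw [Real.norm_of_nonneg (dot_self_nonneg' _)]
    exact hω
  -- integral computations
  have hGval : ∫ ω, G ω ∂P = (1 - γ) * (e ⬝ᵥ e) - ((1 - γ) / lam) * (r ⬝ᵥ H *ᵥ r) := by
    have hGeq : G = fun ω => (1 - γ) * (e ⬝ᵥ e) - ((1 - γ) / lam) * Z ω := by
      funext ω; rw [hG]; field_simp
    rw [hGeq, integral_sub (integrable_const _) (hZint.const_mul _),
      integral_const, integral_const_mul, hZval]
    simp
  have hmain : ∫ ω, (xplus ω - xstar) ⬝ᵥ (xplus ω - xstar) ∂P ≤ ∫ ω, G ω ∂P :=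
    integral_mono_ae hFint hGint hFG
  rw [hGval, hQe] at hmain
  have h1γ : 0 ≤ 1 - γ := by linarith [hγ.2]
  have hstep := mul_le_mul_of_nonneg_left hσbound (div_nonneg h1γ hlam.le)
  have hrw : (1 - γ) * (1 - σ2 / lam) * (e ⬝ᵥ e)
      = (1 - γ) * (e ⬝ᵥ e) - ((1 - γ) / lam) * (σ2 * (e ⬝ᵥ e)) := by
    field_simp
  calc ∫ ω, (xplus ω - xstar) ⬝ᵥ (xplus ω - xstar) ∂P
      ≤ (1 - γ) * (e ⬝ᵥ e) - ((1 - γ) / lam) * ((Q *ᵥ e) ⬝ᵥ (Q *ᵥ e)) := hmain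
    _ ≤ (1 - γ) * (e ⬝ᵥ e) - ((1 - γ) / lam) * (σ2 * (e ⬝ᵥ e)) := by linarith
    _ = (1 - γ) * (1 - σ2 / lam) * (e ⬝ᵥ e) := hrw.symm
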